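/- Let l be a prime with l ≡ 1 (mod 4) and let α be a negative integer that is not a quadratic residue mod l. Then the quadratic form ⟨1, α, l, αl⟩ (i.e., x₁² + αx₂² + lx₃² + αlx₄²) is anisotropic over ℚ_l, and hence anisotropic over ℚ. Consequently -1 has no square root in the quaternion division algebra (α,-l)_ℚ. -/

import Mathlib

section helpers

variable {p : ℕ} [Fact p.Prime]

lemma myToZMod_zero_iff (x : ℤ_[p]) : PadicInt.toZMod x = 0 ↔ ‖x‖ < 1 := by
  rw [← RingHom.mem_ker, PadicInt.ker_toZMod, IsLocalRing.mem_maximalIdeal,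
    PadicInt.mem_nonunits]

lemma myNorm_eq_one_iff (x : ℤ_[p]) : ‖x‖ = 1 ↔ PadicInt.toZMod x ≠ 0 := by
  rw [Ne, myToZMod_zero_iff]
  constructor
  · intro h; simp [h]
  · intro h
    exact le_antisymm (PadicInt.norm_le_one x) (not_lt.mp h)

lemma mySqrtNegOne (hp : p % 4 = 1) : ∃ s : ℚ_[p], s ^ 2 = -1 := by
  obtain ⟨t, ht⟩ : IsSquare (-1 : ZMod p) := by
    rw [ZMod.exists_sq_eq_neg_one_iff]; omega
  obtain ⟨n, hn⟩ : ∃ n : ℕ, (n : ZMod p) = t := ⟨t.val, by simp⟩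
  set a : ℤ_[p] := (n : ℤ_[p]) with ha
  have htz : PadicInt.toZMod a = t := by simp [ha, hn]
  set F : Polynomial ℤ_[p] := Polynomial.X ^ 2 + 1 with hF
  have hFeval : ∀ z : ℤ_[p], F.eval z = z ^ 2 + 1 := by intro z; simp [hF]
  have hFder : ∀ z : ℤ_[p], F.derivative.eval z = 2 * z := by
    intro z; simp [hF, Polynomial.derivative_pow]
  have ht0 : t ≠ 0 := by
    intro h; rw [h, mul_zero] at ht
    exact one_ne_zero (neg_eq_zero.mp ht)
  have h2 : (2 : ZMod p) ≠ 0 := by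
    have : ((2 : ℕ) : ZMod p) ≠ 0 := by
      rw [Ne, ZMod.natCast_eq_zero_iff]
      intro h
      have := (Nat.prime_dvd_prime_iff_eq (Fact.out : p.Prime) Nat.prime_two).mp h
      omega
    simpa using this
  have hder_norm : ‖F.derivative.eval a‖ = 1 := by
    rw [hFder, myNorm_eq_one_iff, map_mul, htz]
    simp only [map_ofNat]
    exact mul_ne_zero (by exact_mod_cast h2) ht0
  have heval_norm : ‖F.eval a‖ < 1 := by
    rw [hFeval, ← myToZMod_zero_iff, map_add, map_pow, htz, map_one]
    linear_combination -ht
  have hnorm : ‖F.eval a‖ < ‖F.derivative.eval a‖ ^ 2 := by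
    rw [hder_norm]; simpa using heval_norm
  obtain ⟨z, hz, -⟩ := hensels_lemma hnorm
  rw [Polynomial.coe_aeval_eq_eval, hFeval] at hz
  refine ⟨(z : ℚ_[p]), ?_⟩
  have : ((z ^ 2 + 1 : ℤ_[p]) : ℚ_[p]) = 0 := by rw [hz]; simp
  push_cast at this
  linear_combination this

end helpers

open Quaternion in
/-- For a prime `l ≡ 1 (mod 4)` and a negative integer `α` that is not a quadratic
residue mod `l`, the form `⟨1, α, l, αl⟩` is anisotropic over `ℚ_l`, hence over `ℚ`,
and consequently `-1` has no square root in `(α, -l)_ℚ`. -/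
theorem anisotropic_form_no_sqrt_neg_one (l : ℕ) [Fact l.Prime] (hl : l % 4 = 1)
    (α : ℤ) (hαneg : α < 0) (hαQR : ¬IsSquare ((α : ZMod l))) :
    (∀ x₁ x₂ x₃ x₄ : ℚ_[l],
        x₁ ^ 2 + (α : ℚ_[l]) * x₂ ^ 2 + (l : ℚ_[l]) * x₃ ^ 2
          + (α : ℚ_[l]) * (l : ℚ_[l]) * x₄ ^ 2 = 0 →
        x₁ = 0 ∧ x₂ = 0 ∧ x₃ = 0 ∧ x₄ = 0) ∧
      (∀ x₁ x₂ x₃ x₄ : ℚ,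
        x₁ ^ 2 + (α : ℚ) * x₂ ^ 2 + (l : ℚ) * x₃ ^ 2
          + (α : ℚ) * (l : ℚ) * x₄ ^ 2 = 0 →
        x₁ = 0 ∧ x₂ = 0 ∧ x₃ = 0 ∧ x₄ = 0) ∧
      ¬∃ y : ℍ[ℚ, (α : ℚ), (-(l : ℚ))], y ^ 2 = -1 := by
  have hα0 : (α : ZMod l) ≠ 0 := fun h => hαQR (h ▸ ⟨0, by simp⟩)
  -- norm of α is 1
  have hαZnorm : ‖(α : ℤ_[l])‖ = 1 := by
    rw [myNorm_eq_one_iff]; simpa using hα0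
  have hαnorm : ‖(α : ℚ_[l])‖ = 1 := by
    rw [← PadicInt.norm_intCast_eq_padic_norm]; exact hαZnorm
  -- -1 is a square mod l
  obtain ⟨c, hc⟩ : IsSquare (-1 : ZMod l) := by
    rw [ZMod.exists_sq_eq_neg_one_iff]; omega
  -- key binary form norm computation
  have key : ∀ u v : ℚ_[l], ‖u ^ 2 + (α : ℚ_[l]) * v ^ 2‖ = max ‖u‖ ‖v‖ ^ 2 := by
    intro u v
    rcases eq_or_ne ‖u‖ ‖v‖ with heq | hne
    · rcases eq_or_ne v 0 with rfl | hv
      · rw [norm_zero] at heq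
        have hu : u = 0 := norm_eq_zero.mp heq
        simp [hu]
      · -- ‖u‖ = ‖v‖ ≠ 0, write u = t * v
        have hv' : ‖v‖ ≠ 0 := norm_ne_zero_iff.mpr hv
        set t : ℚ_[l] := u / v with htdef
        have hu : u = t * v := by rw [htdef, div_mul_cancel₀ u hv]
        have hts : ‖t‖ = 1 := by
          rw [htdef, norm_div, heq]; field_simp
        have htle : ‖t‖ ≤ 1 := le_of_eq hts
        set t' : ℤ_[l] := ⟨t, htle⟩ with ht'
        have ht'norm : ‖t'‖ = 1 := hts
        have ht'z : PadicInt.toZMod t' ≠ 0 := (myNorm_eq_one_iff t').mp ht'norm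
        have hwz : PadicInt.toZMod (t' ^ 2 + (α : ℤ_[l])) ≠ 0 := by
          intro h
          rw [map_add, map_pow] at h
          simp only [map_intCast] at h
          apply hαQR
          have hsq : (PadicInt.toZMod t') ^ 2 = -(α : ZMod l) := by linear_combination h
          refine ⟨c * PadicInt.toZMod t', ?_⟩
          have : (c * PadicInt.toZMod t') * (c * PadicInt.toZMod t')
              = (c * c) * (PadicInt.toZMod t') ^ 2 := by ring
          rw [this, ← hc, hsq]; ring
        have hwnorm : ‖t' ^ 2 + (α : ℤ_[l])‖ = 1 := (myNorm_eq_one_iff _).mpr hwz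
        have hcoe : ((t' ^ 2 + (α : ℤ_[l]) : ℤ_[l]) : ℚ_[l]) = t ^ 2 + (α : ℚ_[l]) := by
          push_cast [ht']
          rfl
        have hQnorm : ‖t ^ 2 + (α : ℚ_[l])‖ = 1 := by
          rw [← hcoe, ← PadicInt.norm_def]; exact hwnorm
        have hfactor : u ^ 2 + (α : ℚ_[l]) * v ^ 2 = v ^ 2 * (t ^ 2 + (α : ℚ_[l])) := by
          rw [hu]; ring
        rw [hfactor, norm_mul, hQnorm, mul_one, norm_pow, ← heq, max_self]
    · have h1 : ‖u ^ 2‖ = ‖u‖ ^ 2 := norm_pow u 2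
      have h2 : ‖(α : ℚ_[l]) * v ^ 2‖ = ‖v‖ ^ 2 := by
        rw [norm_mul, hαnorm, one_mul, norm_pow]
      have hne2 : ‖u ^ 2‖ ≠ ‖(α : ℚ_[l]) * v ^ 2‖ := by
        rw [h1, h2]
        intro h
        exact hne (by nlinarith [norm_nonneg u, norm_nonneg v])
      rw [Padic.add_eq_max_of_ne hne2, h1, h2]
      rcases le_total ‖u‖ ‖v‖ with h | h
      · rw [max_eq_right h, max_eq_right (pow_le_pow_left₀ (norm_nonneg u) h 2)]
      · rw [max_eq_left h, max_eq_left (pow_le_pow_left₀ (norm_nonneg v) h 2)]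
  -- parity of valuations
  have hl1 : (1 : ℝ) < (l : ℝ) := by exact_mod_cast (Fact.out : l.Prime).one_lt
  have hl0 : (l : ℝ) ≠ 0 := by positivity
  have parity : ∀ a b : ℚ_[l], a ≠ 0 → b ≠ 0 → ‖a‖ ^ 2 ≠ ((l : ℝ))⁻¹ * ‖b‖ ^ 2 := by
    intro a b ha hb h
    rw [Padic.norm_eq_zpow_neg_valuation ha, Padic.norm_eq_zpow_neg_valuation hb] at h
    rw [← zpow_natCast ((l:ℝ) ^ (-a.valuation)) 2, ← zpow_mul] at h
    rw [← zpow_natCast ((l:ℝ) ^ (-b.valuation)) 2, ← zpow_mul] at h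
    rw [← zpow_neg_one (l:ℝ), ← zpow_add₀ hl0] at h
    have := (zpow_right_inj₀ (by positivity) hl1.ne').mp h
    omega
  have pick : ∀ u v : ℚ_[l], ¬(u = 0 ∧ v = 0) → ∃ b : ℚ_[l], b ≠ 0 ∧ max ‖u‖ ‖v‖ = ‖b‖ := by
    intro u v huv
    rcases le_total ‖u‖ ‖v‖ with h | h
    · refine ⟨v, ?_, max_eq_right h⟩
      intro hv
      apply huv
      subst hv
      simp only [norm_zero] at h
      exact ⟨norm_le_zero_iff.mp h, rfl⟩
    · refine ⟨u, ?_, max_eq_left h⟩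
      intro hu
      apply huv
      subst hu
      simp only [norm_zero] at h
      exact ⟨rfl, norm_le_zero_iff.mp h⟩
  have part1 : ∀ x₁ x₂ x₃ x₄ : ℚ_[l],
      x₁ ^ 2 + (α : ℚ_[l]) * x₂ ^ 2 + (l : ℚ_[l]) * x₃ ^ 2
        + (α : ℚ_[l]) * (l : ℚ_[l]) * x₄ ^ 2 = 0 →
      x₁ = 0 ∧ x₂ = 0 ∧ x₃ = 0 ∧ x₄ = 0 := by
    intro x₁ x₂ x₃ x₄ hsum
    have hnormEq : max ‖x₁‖ ‖x₂‖ ^ 2 = ((l : ℝ))⁻¹ * max ‖x₃‖ ‖x₄‖ ^ 2 := by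
      have hA : x₁ ^ 2 + (α : ℚ_[l]) * x₂ ^ 2
          = -((l : ℚ_[l]) * (x₃ ^ 2 + (α : ℚ_[l]) * x₄ ^ 2)) := by
        linear_combination hsum
      have h := congrArg norm hA
      rwa [key, norm_neg, norm_mul, key, Padic.norm_p] at h
    have h34 : x₃ = 0 ∧ x₄ = 0 := by
      by_contra hc
      obtain ⟨b, hb, hbmax⟩ := pick x₃ x₄ hc
      have hmax1 : max ‖x₁‖ ‖x₂‖ ≠ 0 := by
        intro h0
        rw [h0] at hnormEq
        have : ‖b‖ ^ 2 = 0 := by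
          rw [← hbmax] at *
          field_simp at hnormEq
          rw [hbmax]
          rw [← hnormEq]; ring
        exact hb (norm_eq_zero.mp (pow_eq_zero_iff two_ne_zero |>.mp this))
      have hc12 : ¬(x₁ = 0 ∧ x₂ = 0) := by
        rintro ⟨rfl, rfl⟩
        simp at hmax1
      obtain ⟨a, ha, hamax⟩ := pick x₁ x₂ hc12
      exact parity a b ha hb (by rw [← hamax, ← hbmax]; exact hnormEq)
    obtain ⟨h3, h4⟩ := h34
    subst h3; subst h4
    have hA0 : x₁ ^ 2 + (α : ℚ_[l]) * x₂ ^ 2 = 0 := by linear_combination hsum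
    have hmax : max ‖x₁‖ ‖x₂‖ ^ 2 = 0 := by
      rw [← key, hA0, norm_zero]
    have hmax0 : max ‖x₁‖ ‖x₂‖ = 0 := pow_eq_zero_iff two_ne_zero |>.mp hmax
    have h1 : x₁ = 0 := norm_le_zero_iff.mp (hmax0 ▸ le_max_left ‖x₁‖ ‖x₂‖)
    have h2 : x₂ = 0 := norm_le_zero_iff.mp (hmax0 ▸ le_max_right ‖x₁‖ ‖x₂‖)
    exact ⟨h1, h2, rfl, rfl⟩
  refine ⟨part1, ?_, ?_⟩
  · intro x₁ x₂ x₃ x₄ h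
    have hcast : ((x₁ : ℚ_[l])) ^ 2 + (α : ℚ_[l]) * (x₂ : ℚ_[l]) ^ 2
        + (l : ℚ_[l]) * (x₃ : ℚ_[l]) ^ 2
        + (α : ℚ_[l]) * (l : ℚ_[l]) * (x₄ : ℚ_[l]) ^ 2 = 0 := by
      have := congrArg (fun q : ℚ => (q : ℚ_[l])) h
      push_cast at this
      convert this using 2 <;> push_cast <;> ring
    obtain ⟨h1, h2, h3, h4⟩ := part1 _ _ _ _ hcast
    refine ⟨?_, ?_, ?_, ?_⟩ <;> [skip; skip; skip; skip] <;>
      first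
        | exact_mod_cast h1
        | exact_mod_cast h2
        | exact_mod_cast h3
        | exact_mod_cast h4
  · rintro ⟨y, hy⟩
    rw [pow_two, QuaternionAlgebra.ext_iff] at hy
    obtain ⟨hre, hi, hj, hk⟩ := hy
    simp only [QuaternionAlgebra.re_mul, QuaternionAlgebra.imI_mul, QuaternionAlgebra.imJ_mul,
      QuaternionAlgebra.imK_mul, QuaternionAlgebra.re_neg, QuaternionAlgebra.imI_neg,
      QuaternionAlgebra.imJ_neg, QuaternionAlgebra.imK_neg, QuaternionAlgebra.re_one,
      QuaternionAlgebra.imI_one, QuaternionAlgebra.imJ_one, QuaternionAlgebra.imK_one,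
      neg_zero] at hre hi hj hk
    rcases eq_or_ne y.re 0 with h0 | h0
    · -- pure quaternion: 1 + α b² - l c² + α l d² = 0 over ℚ
      rw [h0] at hre
      have hQ : 1 + (α : ℚ) * y.imI ^ 2 - (l : ℚ) * y.imJ ^ 2
          + (α : ℚ) * (l : ℚ) * y.imK ^ 2 = 0 := by
        linear_combination hre
      obtain ⟨s, hs⟩ := mySqrtNegOne (p := l) hl
      have hcast : (1 : ℚ_[l]) ^ 2 + (α : ℚ_[l]) * ((y.imI : ℚ_[l])) ^ 2
          + (l : ℚ_[l]) * (s * (y.imJ : ℚ_[l])) ^ 2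
          + (α : ℚ_[l]) * (l : ℚ_[l]) * ((y.imK : ℚ_[l])) ^ 2 = 0 := by
        have hQl := congrArg (fun q : ℚ => (q : ℚ_[l])) hQ
        push_cast at hQl
        have hexp : (s * (y.imJ : ℚ_[l])) ^ 2 = -((y.imJ : ℚ_[l]) ^ 2) := by
          rw [mul_pow, hs]; ring
        rw [one_pow, hexp]
        linear_combination hQl
      have := (part1 _ _ _ _ hcast).1
      exact one_ne_zero this
    · -- real part nonzero forces b=c=d=0, then re² = -1, absurd
      have hb : y.imI = 0 := by
        have : y.re * y.imI + y.imI * y.re = 0 := by linear_combination hi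
        have h2 : (2 * y.re) * y.imI = 0 := by linear_combination this
        rcases mul_eq_zero.mp h2 with h | h
        · exact absurd (by linarith [mul_eq_zero.mp (by linarith : (2:ℚ) * y.re = 0)]) h0
        · exact h
      have hcden : y.imJ = 0 := by
        have h2 : (2 * y.re) * y.imJ = 0 := by linear_combination hj
        rcases mul_eq_zero.mp h2 with h | h
        · exact absurd (by linarith) h0
        · exact h
      have hd : y.imK = 0 := by
        have h2 : (2 * y.re) * y.imK = 0 := by linear_combination hk
        rcases mul_eq_zero.mp h2 with h | h
        · exact absurd (by linarith) h0
        · exact h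
      rw [hb, hcden, hd] at hre
      nlinarith [sq_nonneg y.re, hre]
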